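/- Let p be a prime number, n ≥ 1 an integer, and a_0, a_1, …, a_n integers with 0 ≤ a_i < p for all i, a_0 ≠ 0 and a_n ≠ 0. Set N = Σ_{i=0}^{n} a_i·p^i, and let g(X) = a_n X^n + a_{n-1} X^{n-1} + ⋯ + a_1 X + a_0 − N ∈ ℤ[X]. Then every complex root α of g satisfies p ≤ |α| < p². -/

import Mathlib

open Polynomial

set_option maxHeartbeats 1600000 in
/-- Let `p` be prime, `N = Σ_{i=0}^n a_i p^i` with base-`p` digits `a_i`
(`a_0 ≠ 0`, `a_n ≠ 0`), and let `g(X) = Σ_{i=0}^n a_i X^i − N`.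
Then every complex root `α` of `g` satisfies `p ≤ |α| < p²`. -/
theorem stmt2 (p : ℕ) (hp : p.Prime) (n : ℕ) (hn : 1 ≤ n) (a : ℕ → ℤ)
    (ha : ∀ i ≤ n, 0 ≤ a i ∧ a i < (p : ℤ)) (ha0 : a 0 ≠ 0) (han : a n ≠ 0)
    (N : ℤ) (hN : N = ∑ i ∈ Finset.range (n + 1), a i * (p : ℤ) ^ i)
    (g : Polynomial ℤ)
    (hg : g = (∑ i ∈ Finset.range (n + 1), C (a i) * X ^ i) - C N)
    (α : ℂ) (hα : Polynomial.aeval α g = 0) :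
    (p : ℝ) ≤ ‖α‖ ∧ ‖α‖ < (p : ℝ) ^ 2 := by
  have hp2 : (2:ℝ) ≤ (p:ℝ) := by exact_mod_cast hp.two_le
  have ha0' : 1 ≤ a 0 := lt_of_le_of_ne (ha 0 (by omega)).1 (Ne.symm ha0)
  have han' : 1 ≤ a n := lt_of_le_of_ne (ha n le_rfl).1 (Ne.symm han)
  -- the key algebraic identity
  have hsum : ∑ i ∈ Finset.range (n + 1), (a i : ℂ) * α ^ i = (N : ℂ) := by
    have h := hα
    rw [hg] at h
    simp only [map_sub, map_sum, map_mul, map_pow, aeval_C, aeval_X,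
      algebraMap_int_eq, eq_intCast, map_intCast] at h
    exact sub_eq_zero.mp h
  set r := ‖α‖ with hr
  have hr0 : (0:ℝ) ≤ r := norm_nonneg α
  -- abs of each term
  have habs : ∀ i ∈ Finset.range (n+1), ‖(a i : ℂ) * α ^ i‖ = (a i : ℝ) * r ^ i := by
    intro i hi
    rw [norm_mul, norm_pow, Complex.norm_intCast, abs_of_nonneg]
    exact_mod_cast (ha i (by simpa using Nat.lt_succ_iff.mp (Finset.mem_range.mp hi))).1
  have hNr : ((N:ℝ)) = ∑ i ∈ Finset.range (n+1), (a i : ℝ) * (p:ℝ) ^ i := by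
    rw [hN]; push_cast; ring
  have hNpos : (0:ℝ) < (N:ℝ) := by
    rw [hNr]
    apply Finset.sum_pos'
    · intro i hi
      have hi' : i ≤ n := Nat.lt_succ_iff.mp (Finset.mem_range.mp hi)
      have := (ha i hi').1
      positivity
    · refine ⟨0, Finset.mem_range.mpr (by omega), ?_⟩
      have : (1:ℝ) ≤ (a 0 : ℝ) := by exact_mod_cast ha0'
      positivity
  have hNle : (N:ℝ) ≤ ∑ i ∈ Finset.range (n+1), (a i : ℝ) * r ^ i := by
    have h1 : ‖((N:ℂ))‖ = (N:ℝ) := by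
      rw [Complex.norm_intCast]; exact abs_of_pos hNpos
    calc (N:ℝ) = ‖(∑ i ∈ Finset.range (n+1), (a i : ℂ) * α ^ i)‖ := by
          rw [hsum, h1]
      _ ≤ ∑ i ∈ Finset.range (n+1), ‖(a i : ℂ) * α ^ i‖ :=
          norm_sum_le _ _
      _ = ∑ i ∈ Finset.range (n+1), (a i : ℝ) * r ^ i := Finset.sum_congr rfl habs
  constructor
  · -- lower bound
    by_contra hcon
    push_neg at hcon
    have hlt : ∑ i ∈ Finset.range (n+1), (a i : ℝ) * r ^ i
        < ∑ i ∈ Finset.range (n+1), (a i : ℝ) * (p:ℝ) ^ i := by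
      apply Finset.sum_lt_sum
      · intro i hi
        have hi' : i ≤ n := Nat.lt_succ_iff.mp (Finset.mem_range.mp hi)
        have h1 : (0:ℝ) ≤ (a i : ℝ) := by exact_mod_cast (ha i hi').1
        have h2 : r ^ i ≤ (p:ℝ) ^ i := pow_le_pow_left₀ hr0 hcon.le i
        exact mul_le_mul_of_nonneg_left h2 h1
      · refine ⟨n, Finset.self_mem_range_succ n, ?_⟩
        have h1 : (1:ℝ) ≤ (a n : ℝ) := by exact_mod_cast han'
        have h2 : r ^ n < (p:ℝ) ^ n := pow_lt_pow_left₀ hcon hr0 (by omega)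
        nlinarith
    linarith [hNle, hNr ▸ hlt]
  · -- upper bound
    by_contra hcon
    push_neg at hcon
    rcases eq_or_lt_of_le hn with h1 | hn2
    · -- n = 1 : the root is exactly p
      have hn1 : n = 1 := h1.symm
      subst hn1
      rw [Finset.sum_range_succ, Finset.sum_range_one] at hsum
      have hNC : (N:ℂ) = (a 0 : ℂ) + (a 1 : ℂ) * (p:ℂ) := by
        rw [hN, Finset.sum_range_succ, Finset.sum_range_one]; push_cast; ring
      have hz : (a 1 : ℂ) * (α - (p:ℂ)) = 0 := by
        rw [hNC] at hsum
        linear_combination hsum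
      rcases mul_eq_zero.mp hz with h | h
      · exact han (by exact_mod_cast h)
      · have hαp : α = (p:ℂ) := sub_eq_zero.mp h
        rw [hr, hαp, Complex.norm_natCast] at hcon
        nlinarith
    · -- n ≥ 2
      have hn2' : 2 ≤ n := hn2
      set A : ℝ := (a n : ℝ) with hA
      set S : ℝ := ∑ i ∈ Finset.range n, r ^ i with hS
      have hS0 : (0:ℝ) ≤ S := Finset.sum_nonneg fun i _ => pow_nonneg hr0 i
      have hA1 : (1:ℝ) ≤ A := by rw [hA]; exact_mod_cast han'
      have hAp : A ≤ (p:ℝ) - 1 := by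
        have := (ha n le_rfl).2
        have : (a n : ℝ) < (p:ℝ) := by exact_mod_cast this
        have hint : (a n : ℝ) + 1 ≤ (p:ℝ) := by
          have : a n + 1 ≤ (p:ℤ) := (ha n le_rfl).2
          exact_mod_cast this
        linarith
      -- f1 : A * r^n ≤ N + (p-1) * S
      have hsplit : (a n : ℂ) * α ^ n = (N:ℂ) - ∑ i ∈ Finset.range n, (a i : ℂ) * α ^ i := by
        rw [← hsum, Finset.sum_range_succ]; ring
      have f1 : A * r ^ n ≤ (N:ℝ) + ((p:ℝ) - 1) * S := by
        have h2 := congrArg (‖·‖) hsplit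
        rw [norm_mul, norm_pow, Complex.norm_intCast, abs_of_nonneg
          (by exact_mod_cast (ha n le_rfl).1 : (0:ℝ) ≤ (a n : ℝ))] at h2
        have h3 : ‖((N:ℂ) - ∑ i ∈ Finset.range n, (a i : ℂ) * α ^ i)‖
            ≤ (N:ℝ) + ((p:ℝ) - 1) * S := by
          refine le_trans (norm_sub_le _ _) ?_
          have h4 : ‖((N:ℂ))‖ = (N:ℝ) := by
            rw [Complex.norm_intCast]; exact abs_of_pos hNpos
          have h5 : ‖(∑ i ∈ Finset.range n, (a i : ℂ) * α ^ i)‖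
              ≤ ((p:ℝ) - 1) * S := by
            refine le_trans (norm_sum_le _ _) ?_
            rw [hS, Finset.mul_sum]
            apply Finset.sum_le_sum
            intro i hi
            have hi' : i ≤ n := le_of_lt (Finset.mem_range.mp hi)
            rw [norm_mul, norm_pow, Complex.norm_intCast, abs_of_nonneg
              (by exact_mod_cast (ha i hi').1 : (0:ℝ) ≤ (a i : ℝ))]
            have h6 : (a i : ℝ) ≤ (p:ℝ) - 1 := by
              have : a i + 1 ≤ (p:ℤ) := (ha i hi').2
              have : (a i : ℝ) + 1 ≤ (p:ℝ) := by exact_mod_cast this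
              linarith
            exact mul_le_mul_of_nonneg_right h6 (pow_nonneg hr0 i)
          linarith
        rw [h2]; exact h3
      -- f2 : N ≤ (A+1) * p^n
      have f2 : (N:ℝ) ≤ (A + 1) * (p:ℝ) ^ n := by
        have hg1 : (∑ i ∈ Finset.range n, (p:ℝ) ^ i) * ((p:ℝ) - 1) = (p:ℝ) ^ n - 1 :=
          geom_sum_mul _ n
        have h7 : ∑ i ∈ Finset.range n, (a i : ℝ) * (p:ℝ) ^ i
            ≤ ((p:ℝ) - 1) * ∑ i ∈ Finset.range n, (p:ℝ) ^ i := by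
          rw [Finset.mul_sum]
          apply Finset.sum_le_sum
          intro i hi
          have hi' : i ≤ n := le_of_lt (Finset.mem_range.mp hi)
          have h6 : (a i : ℝ) ≤ (p:ℝ) - 1 := by
            have : a i + 1 ≤ (p:ℤ) := (ha i hi').2
            have : (a i : ℝ) + 1 ≤ (p:ℝ) := by exact_mod_cast this
            linarith
          have hpw : (0:ℝ) ≤ (p:ℝ) ^ i := by positivity
          exact mul_le_mul_of_nonneg_right h6 hpw
        have h8 : (N:ℝ) = (∑ i ∈ Finset.range n, (a i : ℝ) * (p:ℝ) ^ i) + A * (p:ℝ) ^ n := by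
          rw [hNr, Finset.sum_range_succ]
        nlinarith
      -- f3 : (p^2 - 1) * S ≤ r^n
      have hrp2 : (p:ℝ)^2 ≤ r := hcon
      have f3 : ((p:ℝ)^2 - 1) * S ≤ r ^ n := by
        have hg2 : S * (r - 1) = r ^ n - 1 := geom_sum_mul r n
        nlinarith [mul_le_mul_of_nonneg_left (show (p:ℝ)^2 - 1 ≤ r - 1 by linarith) hS0]
      -- f4 : (p^n)^2 ≤ r^n
      have f4 : ((p:ℝ) ^ n) ^ 2 ≤ r ^ n := by
        have h9 : ((p:ℝ)^2) ^ n ≤ r ^ n := pow_le_pow_left₀ (by positivity) hrp2 n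
        calc ((p:ℝ) ^ n) ^ 2 = ((p:ℝ)^2) ^ n := by rw [← pow_mul, ← pow_mul, Nat.mul_comm]
          _ ≤ r ^ n := h9
      have hP0 : (0:ℝ) < (p:ℝ) ^ n := by positivity
      have hPp : (p:ℝ)^2 ≤ (p:ℝ)^n := pow_le_pow_right₀ (by linarith) hn2'
      -- combine, abstracting powers as atoms
      set P : ℝ := (p:ℝ) ^ n with hPdef
      set R : ℝ := r ^ n with hRdef
      have f12 : A * R ≤ (A + 1) * P + ((p:ℝ) - 1) * S := by linarith
      have h10 : ((p:ℝ)+1) * (A * R) ≤ ((p:ℝ)+1) * ((A + 1) * P + ((p:ℝ) - 1) * S) :=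
        mul_le_mul_of_nonneg_left f12 (by linarith)
      have h6 : (((p:ℝ)+1) * A - 1) * R ≤ ((p:ℝ)+1) * (A+1) * P := by nlinarith [h10, f3]
      have hc : (p:ℝ) ≤ ((p:ℝ)+1) * A - 1 := by nlinarith
      have f4' : P * P ≤ R := by nlinarith [f4]
      have h7 : (p:ℝ) * (P * P) ≤ (((p:ℝ)+1) * A - 1) * R :=
        mul_le_mul hc f4' (mul_nonneg hP0.le hP0.le) (by linarith)
      have h8' : (p:ℝ) * (P * P) ≤ ((p:ℝ)+1) * (A+1) * P := le_trans h7 h6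
      have h11 : ((p:ℝ) * P) * P ≤ (((p:ℝ)+1) * (A+1)) * P := by
        rw [mul_assoc]; exact h8'
      have h8 : (p:ℝ) * P ≤ ((p:ℝ)+1) * (A+1) := le_of_mul_le_mul_right h11 hP0
      have h12 : ((p:ℝ)+1) * (A+1) ≤ ((p:ℝ)+1) * (p:ℝ) := by nlinarith [hAp, hp2]
      have h13 : (p:ℝ) * ((p:ℝ)^2) ≤ (p:ℝ) * P := by nlinarith [hPp, hp2]
      nlinarith [h8, h12, h13, hp2]
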